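/- For every integer k ≥ 1, every real λ > 0, and every integer n ≥ 2, the n-th central moment of the Poisson distribution of order k satisfies the recurrence 𝑀̃_n(k,λ) = λ · Σ_{j=2}^{n} C(n−1, j−1) · 𝓢_j(k) · 𝑀̃_{n−j}(k,λ), where 𝑀̃_0(k,λ) = 1 and 𝑀̃_1(k,λ) = 0. -/

import Mathlib

open scoped BigOperators

/-- Probability mass function of the Poisson distribution of order `k` with rate `lam`:
`P_n(k,λ) = e^{-kλ} · Σ_{n₁+2n₂+⋯+k·n_k = n} ∏_{j=1}^k λ^{n_j}/n_j!`. -/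
noncomputable def poissonK (k : ℕ) (lam : ℝ) (n : ℕ) : ℝ :=
  Real.exp (-(k * lam)) *
    ∑ f ∈ Finset.filter (fun f : Fin k → ℕ => ∑ j : Fin k, (j.1 + 1) * f j = n)
        (Fintype.piFinset fun _ : Fin k => Finset.range (n + 1)),
      ∏ j : Fin k, lam ^ f j / (Nat.factorial (f j) : ℝ)

/-- The `n`-th central moment `M̃_n(k,λ) = Σ_{m=0}^∞ (m − μ(k,λ))^n·P_m(k,λ)`,
where `μ(k,λ) = k(k+1)λ/2` is the mean, with the conventions
`M̃_0(k,λ) = 1` and `M̃_1(k,λ) = 0`. -/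
noncomputable def centralMoment (k : ℕ) (lam : ℝ) (n : ℕ) : ℝ :=
  if n = 0 then 1
  else if n = 1 then 0
  else ∑' m : ℕ, ((m : ℝ) - k * (k + 1) * lam / 2) ^ n * poissonK k lam m

/-- The power sum `𝓢_j(k) = Σ_{s=1}^k s^j`. -/
def powerSum (k j : ℕ) : ℕ := ∑ s ∈ Finset.Icc 1 k, s ^ j


set_option maxHeartbeats 1000000

namespace PoissonRec

def gg (k : ℕ) (f : Fin k → ℕ) : ℕ := ∑ j : Fin k, (j.1 + 1) * f j

noncomputable def W (k : ℕ) (lam : ℝ) (f : Fin k → ℕ) : ℝ :=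
  ∏ j : Fin k, lam ^ f j / (Nat.factorial (f j) : ℝ)

variable {k : ℕ} {lam : ℝ}

lemma exp_tsum (x : ℝ) : ∑' n : ℕ, x ^ n / (Nat.factorial n : ℝ) = Real.exp x := by
  rw [Real.exp_eq_exp_ℝ, NormedSpace.exp_eq_tsum_div]

lemma hasSum_pi (k : ℕ) (a : Fin k → ℕ → ℝ) (h0 : ∀ j n, 0 ≤ a j n)
    (hs : ∀ j, Summable (a j)) :
    HasSum (fun f : Fin k → ℕ => ∏ j, a j (f j)) (∏ j, ∑' n, a j n) := by
  induction k with
  | zero =>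
      have h : ∀ f : Fin 0 → ℕ, (∏ j, a j (f j)) = 1 := fun f => by simp
      simp only [h]
      have := hasSum_single (f := fun _ : Fin 0 → ℕ => (1:ℝ)) (default : Fin 0 → ℕ)
        (fun b' hb' => absurd (Subsingleton.elim b' default) hb')
      simpa using this
  | succ k ih =>
      have ih' := ih (fun j => a j.succ) (fun j n => h0 j.succ n) (fun j => hs j.succ)
      set b : (Fin k → ℕ) → ℝ := fun f => ∏ j, a j.succ (f j) with hb
      have hbs : Summable b := ih'.summable
      have hb0 : ∀ f, 0 ≤ b f := fun f => Finset.prod_nonneg fun j _ => h0 j.succ (f j)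
      have h1 : Summable fun p : ℕ × (Fin k → ℕ) => a 0 p.1 * b p.2 :=
        Summable.mul_of_nonneg (hs 0) hbs (fun n => h0 0 n) hb0
      have h2 : HasSum (fun p : ℕ × (Fin k → ℕ) => a 0 p.1 * b p.2)
          ((∑' n, a 0 n) * ∏ j : Fin k, ∑' n, a j.succ n) := by
        have hh := h1.hasSum
        rwa [Summable.tsum_prod h1, show (∑' (x : ℕ) (c : Fin k → ℕ), a 0 x * b c)
            = (∑' n, a 0 n) * ∏ j : Fin k, ∑' n, a j.succ n by
          rw [← ih'.tsum_eq]
          simp_rw [tsum_mul_left]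
          rw [tsum_mul_right]] at hh
      have h3 : HasSum ((fun f : Fin (k+1) → ℕ => ∏ j, a j (f j)) ∘ (Fin.consEquiv (fun _ => ℕ)))
          ((∑' n, a 0 n) * ∏ j : Fin k, ∑' n, a j.succ n) := by
        convert h2 using 1
        funext p
        simp only [Function.comp, Fin.consEquiv_apply]
        rw [Fin.prod_univ_succ]
        simp [hb]
      have h4 := (Equiv.hasSum_iff (Fin.consEquiv (fun _ => ℕ))).mp h3
      convert h4 using 1
      rw [Fin.prod_univ_succ]


lemma W_nonneg (hlam : 0 < lam) (f : Fin k → ℕ) : 0 ≤ W k lam f :=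
  Finset.prod_nonneg fun j _ => div_nonneg (pow_nonneg hlam.le _) (Nat.cast_nonneg _)



/-- master dominating HasSum -/
lemma hasSum_geom_W (hlam : 0 < lam) {r : ℝ} (hr : 0 < r) :
    HasSum (fun f : Fin k → ℕ => r ^ gg k f * W k lam f)
      (∏ j : Fin k, Real.exp (r ^ (j.1 + 1) * lam)) := by
  have key : ∀ f : Fin k → ℕ,
      r ^ gg k f * W k lam f = ∏ j : Fin k, (r ^ (j.1+1) * lam) ^ f j / (Nat.factorial (f j) : ℝ) := by
    intro f
    rw [gg, W, ← Finset.prod_pow_eq_pow_sum, ← Finset.prod_mul_distrib]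
    refine Finset.prod_congr rfl fun j _ => ?_
    rw [mul_pow, ← pow_mul, mul_div_assoc]
  simp only [key]
  have h := hasSum_pi k (fun j n => (r ^ (j.1+1) * lam) ^ n / (Nat.factorial n : ℝ))
    (fun j n => div_nonneg (pow_nonneg (mul_nonneg (pow_nonneg hr.le _) hlam.le) _) (Nat.cast_nonneg _))
    (fun j => Real.summable_pow_div_factorial _)
  simpa only [exp_tsum] using h

lemma hasSum_W (hlam : 0 < lam) :
    HasSum (W k lam) (Real.exp (k * lam)) := by
  have h := hasSum_geom_W (k := k) hlam (r := 1) one_pos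
  have h' : (fun f : Fin k → ℕ => (1:ℝ) ^ gg k f * W k lam f) = W k lam :=
    funext fun f => by rw [one_pow, one_mul]
  rw [h'] at h
  convert h using 1
  simp only [one_pow]
  rw [Finset.prod_const, ← Real.exp_nat_mul, Finset.card_univ, Fintype.card_fin]
  ring_nf

/-- domination principle -/
lemma summable_dom (hlam : 0 < lam) (F : (Fin k → ℕ) → ℝ) (C r : ℝ) (hr : 0 < r)
    (h : ∀ f, |F f| ≤ C * (r ^ gg k f * W k lam f)) : Summable F := by
  refine Summable.of_abs (Summable.of_nonneg_of_le (fun f => abs_nonneg _) h ?_)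
  exact ((hasSum_geom_W hlam hr).summable).mul_left C

lemma abs_sub_le_two_pow (c : ℝ) (x : ℕ) : |(x:ℝ) - c| ≤ (1 + |c|) * 2 ^ x := by
  have h1 : |(x:ℝ) - c| ≤ (x:ℝ) + |c| := by
    have hc1 := le_abs_self c
    have hc2 := neg_le_abs c
    have hx : (0:ℝ) ≤ (x:ℝ) := Nat.cast_nonneg x
    rw [abs_le]
    constructor <;> linarith
  have h2 : (x:ℝ) + |c| ≤ (1 + |c|) * ((x:ℝ) + 1) := by nlinarith [abs_nonneg c, (Nat.cast_nonneg x : (0:ℝ) ≤ (x:ℝ))]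
  have h3 : ((x:ℝ) + 1) ≤ 2 ^ x := by
    have := Nat.lt_two_pow_self (n := x)
    have : (x:ℝ) + 1 ≤ ((2^x : ℕ) : ℝ) := by exact_mod_cast this
    simpa using this
  calc |(x:ℝ) - c| ≤ (1 + |c|) * ((x:ℝ)+1) := le_trans h1 h2
  _ ≤ (1 + |c|) * 2 ^ x := by
      have hc : (0:ℝ) ≤ 1 + |c| := by positivity
      nlinarith
  
lemma bound_pow (m : ℕ) (c : ℝ) (x : ℕ) :
    |((x:ℝ) - c) ^ m| ≤ (1 + |c|) ^ m * ((2:ℝ) ^ m) ^ x := by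
  rw [abs_pow]
  calc |(x:ℝ) - c| ^ m ≤ ((1 + |c|) * 2 ^ x) ^ m :=
        pow_le_pow_left₀ (abs_nonneg _) (abs_sub_le_two_pow c x) m
  _ = (1 + |c|) ^ m * ((2:ℝ) ^ m) ^ x := by
      rw [mul_pow, ← pow_mul, ← pow_mul, mul_comm x m]

lemma cast_le_two_pow (x : ℕ) : (x : ℝ) ≤ 2 ^ x := by
  have := Nat.lt_two_pow_self (n := x)
  have h : (x:ℝ) < ((2^x : ℕ) : ℝ) := by exact_mod_cast this
  simpa using h.le

/-- summability of moment-type families -/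
lemma summable_moment (hlam : 0 < lam) (m : ℕ) (c : ℝ) :
    Summable (fun f : Fin k → ℕ => ((gg k f : ℝ) - c) ^ m * W k lam f) := by
  refine summable_dom hlam _ ((1+|c|)^m) (2^m) (by positivity) fun f => ?_
  rw [abs_mul, abs_of_nonneg (W_nonneg hlam f), ← mul_assoc]
  exact mul_le_mul_of_nonneg_right (bound_pow m c (gg k f)) (W_nonneg hlam f)

lemma coord_le_gg (f : Fin k → ℕ) (j : Fin k) : f j ≤ gg k f := by
  calc f j ≤ (j.1 + 1) * f j := Nat.le_mul_of_pos_left _ (Nat.succ_pos _)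
  _ ≤ gg k f := Finset.single_le_sum (f := fun i => (i.1+1) * f i)
      (fun i _ => Nat.zero_le _) (Finset.mem_univ j)

lemma summable_coord_moment (hlam : 0 < lam) (m : ℕ) (c : ℝ) (j : Fin k) :
    Summable (fun f : Fin k → ℕ => (f j : ℝ) * (((gg k f : ℝ) - c) ^ m * W k lam f)) := by
  refine summable_dom hlam _ ((1+|c|)^m) (2^(m+1)) (by positivity) fun f => ?_
  have hW := W_nonneg hlam f
  rw [abs_mul, abs_mul, abs_of_nonneg hW, abs_of_nonneg (Nat.cast_nonneg (f j))]
  have h1 : (f j : ℝ) ≤ 2 ^ gg k f := by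
    calc (f j : ℝ) ≤ (gg k f : ℝ) := by exact_mod_cast coord_le_gg f j
    _ ≤ 2 ^ gg k f := cast_le_two_pow _
  have h2 := bound_pow m c (gg k f)
  have e : ((2:ℝ) ^ (m+1)) ^ gg k f = 2 ^ gg k f * ((2:ℝ)^m) ^ gg k f := by
    rw [← mul_pow]; ring_nf
  rw [show (f j : ℝ) * (|((gg k f : ℝ) - c) ^ m| * W k lam f)
      = (f j : ℝ) * |((gg k f : ℝ) - c) ^ m| * W k lam f from by ring]
  calc (f j : ℝ) * |((gg k f : ℝ) - c) ^ m| * W k lam f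
      ≤ (2 ^ gg k f) * ((1+|c|)^m * ((2:ℝ)^m) ^ gg k f) * W k lam f := by
        have := mul_le_mul h1 h2 (abs_nonneg _) (by positivity)
        exact mul_le_mul_of_nonneg_right this hW
  _ = (1+|c|)^m * (((2:ℝ) ^ (m+1)) ^ gg k f * W k lam f) := by rw [e]; ring

lemma summable_gg_moment (hlam : 0 < lam) (m : ℕ) (c : ℝ) :
    Summable (fun f : Fin k → ℕ => ((gg k f : ℝ) - c) ^ m * (gg k f : ℝ) * W k lam f) := by
  refine summable_dom hlam _ ((1+|c|)^m) (2^(m+1)) (by positivity) fun f => ?_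
  have hW := W_nonneg hlam f
  rw [abs_mul, abs_mul, abs_of_nonneg hW, abs_of_nonneg (show (0:ℝ) ≤ ((gg k f : ℕ) : ℝ) from Nat.cast_nonneg _)]
  have h1 : ((gg k f : ℕ) : ℝ) ≤ 2 ^ gg k f := cast_le_two_pow _
  have h2 := bound_pow m c (gg k f)
  have e : ((2:ℝ) ^ (m+1)) ^ gg k f = 2 ^ gg k f * ((2:ℝ)^m) ^ gg k f := by
    rw [← mul_pow]; ring_nf
  calc |((gg k f : ℝ) - c) ^ m| * (gg k f : ℝ) * W k lam f
      ≤ ((1+|c|)^m * ((2:ℝ)^m) ^ gg k f) * (2 ^ gg k f) * W k lam f := by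
        have := mul_le_mul h2 h1 (Nat.cast_nonneg _) (by positivity)
        exact mul_le_mul_of_nonneg_right this hW
  _ = (1+|c|)^m * (((2:ℝ) ^ (m+1)) ^ gg k f * W k lam f) := by rw [e]; ring


/-- the shift map on coordinate j -/
def T (j : Fin k) (f : Fin k → ℕ) : Fin k → ℕ := Function.update f j (f j + 1)

lemma T_inj (j : Fin k) : Function.Injective (T j) := by
  intro f f' h
  funext i
  by_cases hi : i = j
  · subst hi
    have := congrFun h i
    simpa [T, Function.update_self] using this
  · have := congrFun h i
    simpa [T, Function.update_of_ne hi] using this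

lemma T_range (j : Fin k) (y : Fin k → ℕ) (hy : y j ≠ 0) : y ∈ Set.range (T j) := by
  refine ⟨Function.update y j (y j - 1), ?_⟩
  funext i
  by_cases hi : i = j
  · subst hi
    simp only [T, Function.update_self, Function.update_idem]
    omega
  · simp [T, Function.update_of_ne hi]

lemma gg_T (j : Fin k) (f : Fin k → ℕ) : gg k (T j f) = gg k f + (j.1 + 1) := by
  have h1 : gg k (T j f) = (j.1+1) * (f j + 1) + ∑ i ∈ Finset.univ.erase j, (i.1+1) * f i := by
    rw [gg, ← Finset.add_sum_erase _ _ (Finset.mem_univ j)]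
    congr 1
    · simp [T, Function.update_self]
    · refine Finset.sum_congr rfl fun i hi => ?_
      rw [T, Function.update_of_ne (Finset.ne_of_mem_erase hi)]
  have h2 : gg k f = (j.1+1) * f j + ∑ i ∈ Finset.univ.erase j, (i.1+1) * f i := by
    rw [gg, ← Finset.add_sum_erase _ _ (Finset.mem_univ j)]
  rw [Nat.mul_succ] at h1
  omega

lemma W_T (hlam : 0 < lam) (j : Fin k) (f : Fin k → ℕ) :
    ((f j : ℝ) + 1) * W k lam (T j f) = lam * W k lam f := by
  have h1 : W k lam (T j f)
      = lam ^ (f j + 1) / (Nat.factorial (f j + 1) : ℝ)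
        * ∏ i ∈ Finset.univ.erase j, lam ^ f i / (Nat.factorial (f i) : ℝ) := by
    rw [W, ← Finset.mul_prod_erase _ _ (Finset.mem_univ j)]
    congr 1
    · simp [T, Function.update_self]
    · refine Finset.prod_congr rfl fun i hi => ?_
      rw [T, Function.update_of_ne (Finset.ne_of_mem_erase hi)]
  have h2 : W k lam f
      = lam ^ f j / (Nat.factorial (f j) : ℝ)
        * ∏ i ∈ Finset.univ.erase j, lam ^ f i / (Nat.factorial (f i) : ℝ) := by
    rw [W, ← Finset.mul_prod_erase _ _ (Finset.mem_univ j)]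
  rw [h1, h2]
  have hfact : (Nat.factorial (f j + 1) : ℝ) = ((f j : ℝ) + 1) * (Nat.factorial (f j) : ℝ) := by
    rw [Nat.factorial_succ]; push_cast; ring
  have hne : ((f j : ℝ) + 1) ≠ 0 := by positivity
  have hfne : (Nat.factorial (f j) : ℝ) ≠ 0 := Nat.cast_ne_zero.mpr (Nat.factorial_ne_zero _)
  rw [hfact, pow_succ]
  field_simp

/-- Stein-type identity. Requires no summability hypotheses. -/
lemma stein (hlam : 0 < lam) (j : Fin k) (H : (Fin k → ℕ) → ℝ) :
    ∑' f : Fin k → ℕ, (f j : ℝ) * (H f * W k lam f)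
      = lam * ∑' f : Fin k → ℕ, H (T j f) * W k lam f := by
  have key := Function.Injective.tsum_eq (T_inj j)
    (f := fun y : Fin k → ℕ => (y j : ℝ) * (H y * W k lam y)) ?_
  · rw [← key, ← tsum_mul_left]
    congr 1
    funext f
    have h1 : ((T j f) j : ℝ) = (f j : ℝ) + 1 := by
      simp [T]
    rw [h1]
    have := W_T hlam j f
    calc ((f j : ℝ) + 1) * (H (T j f) * W k lam (T j f))
        = H (T j f) * (((f j : ℝ) + 1) * W k lam (T j f)) := by ring
    _ = H (T j f) * (lam * W k lam f) := by rw [this]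
    _ = lam * (H (T j f) * W k lam f) := by ring
  · intro y hy
    by_cases h : y j = 0
    · exfalso
      apply hy
      simp [h]
    · exact T_range j y h


/-! ### moments -/

noncomputable def E (k : ℕ) (lam : ℝ) (n : ℕ) : ℝ :=
  ∑' f : Fin k → ℕ, ((gg k f : ℝ) - k * (k + 1) * lam / 2) ^ n * W k lam f

lemma powerSum_cast (k p : ℕ) :
    ((powerSum k p : ℕ) : ℝ) = ∑ j : Fin k, ((j.1 : ℝ) + 1) ^ p := by
  induction k with
  | zero => simp [powerSum]
  | succ k ih =>
      rw [powerSum, Finset.sum_Icc_succ_top (by omega), ← powerSum] at *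
      rw [Fin.sum_univ_castSucc]
      push_cast
      rw [ih]
      simp

lemma sum_fin_real (k : ℕ) (lam : ℝ) :
    lam * ∑ j : Fin k, ((j.1 : ℝ) + 1) = (k : ℝ) * ((k : ℝ) + 1) * lam / 2 := by
  have h : (∑ j : Fin k, ((j.1 : ℝ) + 1)) = (k : ℝ) * ((k : ℝ) + 1) / 2 := by
    induction k with
    | zero => simp
    | succ k ih =>
        rw [Fin.sum_univ_castSucc]
        simp only [Fin.coe_castSucc]
        push_cast
        rw [ih]
        ring
  rw [h]; ring

/-- The fundamental recurrence for unnormalized moments. -/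
lemma E_rec (hlam : 0 < lam) (m : ℕ) :
    E k lam (m + 1) = lam * ∑ j ∈ Finset.Icc 2 (m + 1),
      (Nat.choose m (j - 1) : ℝ) * (powerSum k j : ℝ) * E k lam (m + 1 - j) := by
  set mu : ℝ := (k : ℝ) * ((k : ℝ) + 1) * lam / 2 with hmu_def
  have hmu : mu = lam * ∑ j : Fin k, ((j.1 : ℝ) + 1) := (sum_fin_real k lam).symm
  -- Step A
  have hA : E k lam (m + 1)
      = (∑' f : Fin k → ℕ, ((gg k f : ℝ) - mu) ^ m * (gg k f : ℝ) * W k lam f)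
        - mu * E k lam m := by
    rw [E, tsum_congr (fun f : Fin k → ℕ => show ((gg k f : ℝ) - mu) ^ (m+1) * W k lam f
        = ((gg k f : ℝ) - mu) ^ m * (gg k f : ℝ) * W k lam f
          - mu * (((gg k f : ℝ) - mu) ^ m * W k lam f) from by rw [pow_succ]; ring)]
    rw [Summable.tsum_sub (summable_gg_moment hlam m mu)
      ((summable_moment hlam m mu).mul_left mu)]
    rw [tsum_mul_left, E]
  -- Step B
  have hB : (∑' f : Fin k → ℕ, ((gg k f : ℝ) - mu) ^ m * (gg k f : ℝ) * W k lam f)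
      = ∑ j : Fin k, ((j.1 : ℝ) + 1)
          * ∑' f : Fin k → ℕ, (f j : ℝ) * (((gg k f : ℝ) - mu) ^ m * W k lam f) := by
    have hcast : ∀ f : Fin k → ℕ, (gg k f : ℝ) = ∑ j : Fin k, ((j.1 : ℝ) + 1) * (f j : ℝ) := by
      intro f; rw [gg]; push_cast; rfl
    have hptw : ∀ f : Fin k → ℕ, ((gg k f : ℝ) - mu) ^ m * (gg k f : ℝ) * W k lam f
        = ∑ j : Fin k, ((j.1 : ℝ) + 1) * ((f j : ℝ) * (((gg k f : ℝ) - mu) ^ m * W k lam f)) := by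
      intro f
      rw [show ((gg k f : ℝ) - mu) ^ m * (gg k f : ℝ) * W k lam f
          = (gg k f : ℝ) * (((gg k f : ℝ) - mu) ^ m * W k lam f) from by ring, hcast f,
        Finset.sum_mul]
      exact Finset.sum_congr rfl fun j _ => by ring
    rw [tsum_congr hptw, Summable.tsum_finsetSum
      (fun j _ => (summable_coord_moment hlam m mu j).mul_left _)]
    exact Finset.sum_congr rfl fun j _ => tsum_mul_left
  -- Step C
  have hC : ∀ j : Fin k,
      (∑' f : Fin k → ℕ, (f j : ℝ) * (((gg k f : ℝ) - mu) ^ m * W k lam f))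
        = lam * ∑ i ∈ Finset.range (m + 1),
            ((Nat.choose m i : ℝ) * ((j.1 : ℝ) + 1) ^ (m - i)) * E k lam i := by
    intro j
    rw [stein hlam j (fun f => ((gg k f : ℝ) - mu) ^ m)]
    congr 1
    have hpt : ∀ f : Fin k → ℕ, ((gg k (T j f) : ℝ) - mu) ^ m * W k lam f
        = ∑ i ∈ Finset.range (m + 1),
            (((gg k f : ℝ) - mu) ^ i * ((j.1 : ℝ) + 1) ^ (m - i) * (Nat.choose m i : ℝ))
              * W k lam f := by
      intro f
      rw [gg_T]
      push_cast
      rw [show ((gg k f : ℝ) + ((j.1 : ℝ) + 1) - mu) = ((gg k f : ℝ) - mu) + ((j.1 : ℝ) + 1)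
        from by ring, add_pow, Finset.sum_mul]
    have hsummand : ∀ i ∈ Finset.range (m + 1), Summable (fun f : Fin k → ℕ =>
        (((gg k f : ℝ) - mu) ^ i * ((j.1 : ℝ) + 1) ^ (m - i) * (Nat.choose m i : ℝ))
          * W k lam f) := by
      intro i _
      refine ((summable_moment hlam i mu).mul_left
        (((j.1 : ℝ) + 1) ^ (m - i) * (Nat.choose m i : ℝ))).congr fun f => ?_
      ring
    rw [tsum_congr hpt, Summable.tsum_finsetSum hsummand]
    refine Finset.sum_congr rfl fun i _ => ?_
    have : (fun f : Fin k → ℕ =>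
        (((gg k f : ℝ) - mu) ^ i * ((j.1 : ℝ) + 1) ^ (m - i) * (Nat.choose m i : ℝ))
          * W k lam f)
        = fun f : Fin k → ℕ => (((j.1 : ℝ) + 1) ^ (m - i) * (Nat.choose m i : ℝ))
            * (((gg k f : ℝ) - mu) ^ i * W k lam f) := by
      funext f; ring
    rw [this, tsum_mul_left, ← E]
    ring
  -- Step D : assemble
  rw [hA, hB]
  rw [Finset.sum_congr rfl (fun j _ => by rw [hC j])]
  -- swap sums
  have hswap : (∑ j : Fin k, ((j.1 : ℝ) + 1) * (lam * ∑ i ∈ Finset.range (m + 1),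
        ((Nat.choose m i : ℝ) * ((j.1 : ℝ) + 1) ^ (m - i)) * E k lam i))
      = lam * ∑ i ∈ Finset.range (m + 1),
          (Nat.choose m i : ℝ) * (∑ j : Fin k, ((j.1 : ℝ) + 1) ^ (m - i + 1)) * E k lam i := by
    rw [Finset.mul_sum]
    rw [show (∑ j : Fin k, ((j.1 : ℝ) + 1) * (lam * ∑ i ∈ Finset.range (m + 1),
        ((Nat.choose m i : ℝ) * ((j.1 : ℝ) + 1) ^ (m - i)) * E k lam i))
      = ∑ j : Fin k, ∑ i ∈ Finset.range (m + 1),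
          lam * ((Nat.choose m i : ℝ) * (((j.1 : ℝ) + 1) ^ (m - i + 1)) * E k lam i) from
      Finset.sum_congr rfl fun j _ => by
        rw [Finset.mul_sum, Finset.mul_sum]
        exact Finset.sum_congr rfl fun i _ => by rw [pow_succ]; ring]
    rw [Finset.sum_comm]
    refine Finset.sum_congr rfl fun i _ => ?_
    calc (∑ j : Fin k, lam * ((Nat.choose m i : ℝ) * ((j.1 : ℝ) + 1) ^ (m - i + 1) * E k lam i))
        = ∑ j : Fin k, (lam * (Nat.choose m i : ℝ) * E k lam i) * ((j.1 : ℝ) + 1) ^ (m - i + 1) :=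
          Finset.sum_congr rfl fun j _ => by ring
    _ = (lam * (Nat.choose m i : ℝ) * E k lam i)
          * ∑ j : Fin k, ((j.1 : ℝ) + 1) ^ (m - i + 1) := by rw [← Finset.mul_sum]
    _ = lam * ((Nat.choose m i : ℝ) * (∑ j : Fin k, ((j.1 : ℝ) + 1) ^ (m - i + 1))
          * E k lam i) := by ring
  rw [hswap]
  rw [Finset.sum_range_succ]
  have hlast : lam * ((Nat.choose m m : ℝ)
      * (∑ j : Fin k, ((j.1 : ℝ) + 1) ^ (m - m + 1)) * E k lam m) = mu * E k lam m := by
    rw [Nat.choose_self, Nat.sub_self, hmu]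
    norm_num
    ring
  rw [mul_add, hlast, add_sub_cancel_right]
  congr 1
  refine Finset.sum_bij' (fun i _ => m + 1 - i) (fun j _ => m + 1 - j) ?_ ?_ ?_ ?_ ?_
  · intro a ha
    simp only [Finset.mem_range] at ha
    simp only [Finset.mem_Icc]
    omega
  · intro a ha
    simp only [Finset.mem_Icc] at ha
    simp only [Finset.mem_range]
    omega
  · intro a ha
    simp only [Finset.mem_range] at ha
    show m + 1 - (m + 1 - a) = a
    omega
  · intro a ha
    simp only [Finset.mem_Icc] at ha
    show m + 1 - (m + 1 - a) = a
    omega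
  · intro a ha
    simp only [Finset.mem_range] at ha
    have h1 : m + 1 - a - 1 = m - a := by omega
    have h2 : m + 1 - (m + 1 - a) = a := by omega
    have h3 : m - a + 1 = m + 1 - a := by omega
    rw [h1, h2, powerSum_cast, Nat.choose_symm (by omega : a ≤ m), h3]

lemma E_zero (hlam : 0 < lam) : E k lam 0 = Real.exp (k * lam) := by
  rw [E]
  rw [tsum_congr (fun f : Fin k → ℕ => show ((gg k f : ℝ) - _) ^ 0 * W k lam f = W k lam f from
    by rw [pow_zero, one_mul])]
  exact (hasSum_W hlam).tsum_eq

lemma E_one (hlam : 0 < lam) : E k lam 1 = 0 := by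
  have h := E_rec (k := k) hlam 0
  rw [show Finset.Icc 2 (0+1) = ∅ from Finset.Icc_eq_empty (by omega)] at h
  simpa using h

/-- fiberwise decomposition: the tsum over ℕ equals the normalized E. -/
lemma cm_eq (hlam : 0 < lam) (n : ℕ) :
    (∑' m : ℕ, ((m : ℝ) - k * (k + 1) * lam / 2) ^ n * poissonK k lam m)
      = Real.exp (-(k * lam)) * E k lam n := by
  set mu : ℝ := (k : ℝ) * ((k : ℝ) + 1) * lam / 2 with hmu_def
  set F : (Fin k → ℕ) → ℝ := fun f => ((gg k f : ℝ) - mu) ^ n * W k lam f with hF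
  have hs : Summable F := summable_moment hlam n mu
  have hfib := hs.hasSum.tsum_fiberwise (gg k)
  -- each fiber tsum is a finite sum
  have hfin : ∀ m : ℕ, (∑' f : (gg k) ⁻¹' {m}, F f)
      = ∑ f ∈ Finset.filter (fun f : Fin k → ℕ => gg k f = m)
          (Fintype.piFinset fun _ : Fin k => Finset.range (m + 1)), F f := by
    intro m
    rw [tsum_subtype]
    rw [tsum_eq_sum (s := Finset.filter (fun f : Fin k → ℕ => gg k f = m)
        (Fintype.piFinset fun _ : Fin k => Finset.range (m + 1)))]
    · refine Finset.sum_congr rfl fun f hf => ?_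
      rw [Finset.mem_filter] at hf
      exact Set.indicator_of_mem (by simp [hf.2]) F
    · intro f hf
      by_cases hg : gg k f = m
      · exfalso
        apply hf
        rw [Finset.mem_filter]
        refine ⟨?_, hg⟩
        rw [Fintype.mem_piFinset]
        intro j
        rw [Finset.mem_range]
        have := coord_le_gg f j
        omega
      · exact Set.indicator_of_notMem (by simp [hg]) F
  -- identify the summand
  have hterm : ∀ m : ℕ, ((m : ℝ) - mu) ^ n * poissonK k lam m
      = Real.exp (-(k * lam)) * ∑' f : (gg k) ⁻¹' {m}, F f := by
    intro m
    rw [poissonK, hfin m]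
    have hAB : Finset.filter (fun f : Fin k → ℕ => ∑ j : Fin k, (j.1 + 1) * f j = m)
          (Fintype.piFinset fun _ : Fin k => Finset.range (m + 1))
        = Finset.filter (fun f : Fin k → ℕ => gg k f = m)
          (Fintype.piFinset fun _ : Fin k => Finset.range (m + 1)) := by
      apply Finset.filter_congr
      intro f _
      rw [gg]
    rw [hAB, Finset.mul_sum, Finset.mul_sum, Finset.mul_sum]
    refine Finset.sum_congr rfl fun f hf => ?_
    rw [Finset.mem_filter] at hf
    simp only [hF, W]
    rw [← hf.2]
    ring
  -- put together
  calc (∑' m : ℕ, ((m : ℝ) - mu) ^ n * poissonK k lam m)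
      = ∑' m : ℕ, Real.exp (-(k * lam)) * ∑' f : (gg k) ⁻¹' {m}, F f := tsum_congr hterm
  _ = Real.exp (-(k * lam)) * ∑' m : ℕ, ∑' f : (gg k) ⁻¹' {m}, F f := tsum_mul_left
  _ = Real.exp (-(k * lam)) * E k lam n := by rw [hfib.tsum_eq, hF, E]

lemma centralMoment_eq (hlam : 0 < lam) (n : ℕ) :
    centralMoment k lam n = Real.exp (-(k * lam)) * E k lam n := by
  rcases n with _ | n
  · rw [centralMoment, if_pos rfl, E_zero hlam, ← Real.exp_add]
    norm_num
  rcases n with _ | n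
  · rw [centralMoment, if_neg (by omega), if_pos rfl, E_one hlam, mul_zero]
  · rw [centralMoment, if_neg (by omega), if_neg (by omega)]
    exact cm_eq hlam (n + 2)


end PoissonRec

/-- Recurrence for the central moments of the Poisson distribution of order `k`:
`M̃_n = λ · Σ_{j=2}^{n} C(n−1, j−1) · 𝓢_j(k) · M̃_{n−j}` for `n ≥ 2`. -/
theorem poissonK_centralMoment_recurrence (k : ℕ) (hk : 1 ≤ k) (lam : ℝ) (hlam : 0 < lam)
    (n : ℕ) (hn : 2 ≤ n) :
    centralMoment k lam n =
      lam * ∑ j ∈ Finset.Icc 2 n,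
        (Nat.choose (n - 1) (j - 1) : ℝ) * (powerSum k j : ℝ) * centralMoment k lam (n - j) := by
  obtain ⟨m, rfl⟩ : ∃ m, n = m + 1 := ⟨n - 1, by omega⟩
  rw [PoissonRec.centralMoment_eq hlam, PoissonRec.E_rec hlam m]
  rw [show m + 1 - 1 = m from rfl]
  rw [Finset.mul_sum, Finset.mul_sum, Finset.mul_sum]
  refine Finset.sum_congr rfl fun j hj => ?_
  rw [PoissonRec.centralMoment_eq hlam]
  ring
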